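/- The q-bit stochastic quantizer Q applied coordinatewise to a vector x ∈ R^d is unbiased, E[Q(x,q)] = x, and satisfies the variance bound E[||Q(x,q) - x||_2^2] ≤ min(d/2^{2(q-1)}, sqrt(d)/2^{q-1}) · ||x||_2^2. -/

import Mathlib

open MeasureTheory

lemma qsgd_two_val_repr {Ω : Type*} (f : Ω → ℝ) (A : Set Ω) (c₁ c₂ : ℝ)
    (h1 : ∀ ω ∈ A, f ω = c₁) (h2 : ∀ ω ∉ A, f ω = c₂) :
    f = fun ω => A.indicator (fun _ => c₁) ω + Aᶜ.indicator (fun _ => c₂) ω := by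
  funext ω
  by_cases h : ω ∈ A
  · simp [Set.indicator_of_mem h, h, h1 ω h]
  · simp [h, h2 ω h]

lemma qsgd_integrable_two_val {Ω : Type*} [MeasurableSpace Ω] (P : Measure Ω)
    [IsProbabilityMeasure P] (f : Ω → ℝ) (A : Set Ω) (hA : MeasurableSet A) (c₁ c₂ : ℝ)
    (h1 : ∀ ω ∈ A, f ω = c₁) (h2 : ∀ ω ∉ A, f ω = c₂) : Integrable f P := by
  rw [qsgd_two_val_repr f A c₁ c₂ h1 h2]
  exact ((integrable_const c₁).indicator hA).add ((integrable_const c₂).indicator hA.compl)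

lemma qsgd_integral_two_val {Ω : Type*} [MeasurableSpace Ω] (P : Measure Ω)
    [IsProbabilityMeasure P] (f : Ω → ℝ) (A : Set Ω) (hA : MeasurableSet A) (c₁ c₂ : ℝ)
    (h1 : ∀ ω ∈ A, f ω = c₁) (h2 : ∀ ω ∉ A, f ω = c₂) (p : ℝ) (hp : 0 ≤ p)
    (hP : P A = ENNReal.ofReal p) :
    ∫ ω, f ω ∂P = c₁ * p + c₂ * (1 - p) := by
  have hple : ENNReal.ofReal p ≤ 1 := hP ▸ prob_le_one
  have hp1 : p ≤ 1 := ENNReal.ofReal_le_one.mp hple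
  have hc : P Aᶜ = ENNReal.ofReal (1 - p) := by
    rw [measure_compl hA (measure_ne_top P A), hP, measure_univ,
      ENNReal.ofReal_sub _ hp, ENNReal.ofReal_one]
  have h1' : ∫ ω, f ω ∂P
      = ∫ ω, (A.indicator (fun _ => c₁) ω + Aᶜ.indicator (fun _ => c₂) ω) ∂P := by
    rw [← qsgd_two_val_repr f A c₁ c₂ h1 h2]
  rw [h1', integral_add ((integrable_const c₁).indicator hA)
      ((integrable_const c₂).indicator hA.compl),
    integral_indicator_const _ hA, integral_indicator_const _ hA.compl, measureReal_def, measureReal_def, hP, hc,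
    ENNReal.toReal_ofReal hp, ENNReal.toReal_ofReal (by linarith)]
  simp [mul_comm]

theorem stochastic_quantizer_unbiased_and_variance
    (d q : ℕ) (hd : 0 < d) (hq : 1 ≤ q)
    {Ω : Type*} [MeasurableSpace Ω] (P : Measure Ω) [IsProbabilityMeasure P]
    (x : Fin d → ℝ) (hx : x ≠ 0)
    (s : ℝ) (hs : s = 2 ^ (q - 1))
    (nx : ℝ) (hnx : nx = Real.sqrt (∑ j, (x j) ^ 2))
    (r : Fin d → ℝ) (hr : ∀ i, r i = s * |x i| / nx)
    (ξ : Fin d → Ω → ℝ)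
    (hmeas : ∀ i, Measurable (ξ i))
    (hindep : ProbabilityTheory.iIndepFun ξ P)
    (hrange : ∀ i ω, ξ i ω = (⌈r i⌉ : ℝ) / s ∨ ξ i ω = (⌊r i⌋ : ℝ) / s)
    (hhi : ∀ i, P {ω | ξ i ω = (⌈r i⌉ : ℝ) / s} = ENNReal.ofReal (r i - ⌊r i⌋))
    (Q : Ω → Fin d → ℝ)
    (hQ : ∀ ω i, Q ω i = nx * Real.sign (x i) * ξ i ω) :
    (∀ i, ∫ ω, Q ω i ∂P = x i) ∧
    (∫ ω, ∑ i, (Q ω i - x i) ^ 2 ∂P ≤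
      min ((d : ℝ) / 2 ^ (2 * (q - 1))) (Real.sqrt d / 2 ^ (q - 1)) * ∑ i, (x i) ^ 2) := by
  have hs0 : (0:ℝ) < s := by rw [hs]; positivity
  have hsum0 : (0:ℝ) < ∑ j, (x j)^2 := by
    obtain ⟨j, hj⟩ : ∃ j, x j ≠ 0 := by
      by_contra h; push_neg at h; exact hx (funext h)
    exact Finset.sum_pos' (fun i _ => sq_nonneg _) ⟨j, Finset.mem_univ j, by positivity⟩
  have hnx0 : 0 < nx := by rw [hnx]; exact Real.sqrt_pos.mpr hsum0
  have hnxsq : nx ^ 2 = ∑ j, (x j)^2 := by rw [hnx]; exact Real.sq_sqrt hsum0.le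
  have hr0 : ∀ i, 0 ≤ r i := fun i => by rw [hr]; positivity
  set A : Fin d → Set Ω := fun i => {ω | ξ i ω = (⌈r i⌉ : ℝ) / s} with hA
  have hAmeas : ∀ i, MeasurableSet (A i) := fun i =>
    (hmeas i) (measurableSet_singleton ((⌈r i⌉ : ℝ) / s))
  have hcf : ∀ i, (⌈r i⌉ : ℝ) = (⌊r i⌋ : ℝ) + 1 := by
    intro i
    by_contra h
    have heq : ⌈r i⌉ = ⌊r i⌋ := by
      have h1 : ⌈r i⌉ ≤ ⌊r i⌋ + 1 := Int.ceil_le_floor_add_one _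
      have h2 : ⌊r i⌋ ≤ ⌈r i⌉ := Int.floor_le_ceil _
      have h3 : ⌈r i⌉ ≠ ⌊r i⌋ + 1 := by
        intro hh; apply h; rw [hh]; push_cast; ring
      omega
    have hint : r i = (⌊r i⌋ : ℝ) := by
      have h1 : r i ≤ (⌈r i⌉ : ℝ) := Int.le_ceil _
      have h2 : (⌊r i⌋ : ℝ) ≤ r i := Int.floor_le _
      rw [heq] at h1; push_cast at h1; linarith
    have hAuniv : A i = Set.univ := by
      ext ω
      simp only [hA, Set.mem_setOf_eq, Set.mem_univ, iff_true]
      rcases hrange i ω with h' | h'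
      · exact h'
      · rw [h', heq]
    have h0 : P (A i) = 0 := by
      have h4 := hhi i
      rw [show r i - ((⌊r i⌋ : ℤ) : ℝ) = 0 from sub_eq_zero_of_eq hint, ENNReal.ofReal_zero] at h4
      exact h4
    rw [hAuniv, measure_univ] at h0
    exact one_ne_zero h0
  have hfl0 : ∀ i, (0:ℝ) ≤ (⌊r i⌋ : ℝ) := by
    intro i; exact_mod_cast Int.floor_nonneg.mpr (hr0 i)
  set p : Fin d → ℝ := fun i => r i - ⌊r i⌋ with hp
  have hp0 : ∀ i, 0 ≤ p i := fun i => by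
    simp only [hp, sub_nonneg]; exact Int.floor_le _
  have hp1 : ∀ i, p i ≤ 1 := fun i => by
    have := Int.lt_floor_add_one (r i); simp only [hp]; linarith
  have hxne : ∀ i, x i ≠ 0 := by
    intro i hxi
    have hri : r i = 0 := by rw [hr, hxi]; simp
    have h1 := hcf i
    rw [hri] at h1; simp at h1
  have hsabs : ∀ i, Real.sign (x i) * |x i| = x i := by
    intro i
    rcases lt_trichotomy (x i) 0 with h | h | h
    · rw [Real.sign_of_neg h, abs_of_neg h]; ring
    · exact absurd h (hxne i)
    · rw [Real.sign_of_pos h, abs_of_pos h]; ring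
  have hsign : ∀ i, Real.sign (x i) = 1 ∨ Real.sign (x i) = -1 := by
    intro i
    rcases lt_trichotomy (x i) 0 with h | h | h
    · right; exact Real.sign_of_neg h
    · exact absurd h (hxne i)
    · left; exact Real.sign_of_pos h
  have hmean : ∀ i, ∫ ω, ξ i ω ∂P = r i / s := by
    intro i
    have h5 := qsgd_integral_two_val P (ξ i) (A i) (hAmeas i)
      ((⌈r i⌉ : ℝ) / s) ((⌊r i⌋ : ℝ) / s)
      (fun ω h => h) (fun ω h => (hrange i ω).resolve_left h)
      (p i) (hp0 i) (hhi i)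
    rw [h5, hcf i]
    simp only [hp]
    set F := ((⌊r i⌋ : ℤ) : ℝ) with hF
    field_simp
    ring
  have hub : ∀ i, ∫ ω, Q ω i ∂P = x i := by
    intro i
    have heq : (fun ω => Q ω i) = fun ω => (nx * Real.sign (x i)) * ξ i ω := by
      funext ω; rw [hQ]
    rw [heq, integral_const_mul, hmean i, hr i]
    have h6 : nx * Real.sign (x i) * (s * |x i| / nx / s) = Real.sign (x i) * |x i| := by
      field_simp
    rw [h6, hsabs]
  refine ⟨hub, ?_⟩
  have hxi : ∀ i, x i = nx * Real.sign (x i) * (r i / s) := by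
    intro i
    rw [hr i]
    have h6 : nx * Real.sign (x i) * (s * |x i| / nx / s) = Real.sign (x i) * |x i| := by
      field_simp
    rw [h6, hsabs]
  have hint : ∀ i, Integrable (fun ω => (Q ω i - x i)^2) P := by
    intro i
    refine qsgd_integrable_two_val P _ (A i) (hAmeas i)
      ((nx * Real.sign (x i) * ((⌈r i⌉ : ℝ)/s) - x i)^2)
      ((nx * Real.sign (x i) * ((⌊r i⌋ : ℝ)/s) - x i)^2) ?_ ?_
    · intro ω h
      show (Q ω i - x i)^2 = (nx * Real.sign (x i) * ((⌈r i⌉ : ℝ)/s) - x i)^2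
      rw [hQ, (h : ξ i ω = (⌈r i⌉ : ℝ)/s)]
    · intro ω h
      show (Q ω i - x i)^2 = (nx * Real.sign (x i) * ((⌊r i⌋ : ℝ)/s) - x i)^2
      rw [hQ, (hrange i ω).resolve_left h]
  have hvar : ∀ i, ∫ ω, (Q ω i - x i)^2 ∂P = nx^2 * (p i * (1 - p i)) / s^2 := by
    intro i
    have hval := qsgd_integral_two_val P (fun ω => (Q ω i - x i)^2) (A i) (hAmeas i)
      ((nx * Real.sign (x i) * ((⌈r i⌉ : ℝ)/s) - x i)^2)
      ((nx * Real.sign (x i) * ((⌊r i⌋ : ℝ)/s) - x i)^2)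
      (fun ω h => by
        show (Q ω i - x i)^2 = (nx * Real.sign (x i) * ((⌈r i⌉ : ℝ)/s) - x i)^2
        rw [hQ, (h : ξ i ω = (⌈r i⌉ : ℝ)/s)])
      (fun ω h => by
        show (Q ω i - x i)^2 = (nx * Real.sign (x i) * ((⌊r i⌋ : ℝ)/s) - x i)^2
        rw [hQ, (hrange i ω).resolve_left h])
      (p i) (hp0 i) (hhi i)
    have hxie := hxi i
    rcases hsign i with he | he <;>
      rw [he] at hxie <;>
      rw [hval, hcf i, he, hxie] <;>
      simp only [hp] <;>
      set F := ((⌊r i⌋ : ℤ) : ℝ) with hF <;>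
      field_simp <;>
      ring
  have hsumint : ∫ ω, ∑ i, (Q ω i - x i)^2 ∂P = ∑ i, nx^2 * (p i * (1 - p i)) / s^2 := by
    rw [integral_finset_sum _ (fun i _ => hint i)]
    exact Finset.sum_congr rfl (fun i _ => hvar i)
  rw [hsumint, ← hnxsq]
  have hmin : min ((d : ℝ) / 2 ^ (2 * (q - 1))) (Real.sqrt d / 2 ^ (q - 1)) * nx ^ 2
      = min ((d : ℝ) / 2 ^ (2 * (q - 1)) * nx^2) (Real.sqrt d / 2 ^ (q - 1) * nx^2) := by
    rcases le_total ((d : ℝ) / 2 ^ (2 * (q - 1))) (Real.sqrt d / 2 ^ (q - 1)) with h | h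
    · rw [min_eq_left h, min_eq_left (mul_le_mul_of_nonneg_right h (sq_nonneg nx))]
    · rw [min_eq_right h, min_eq_right (mul_le_mul_of_nonneg_right h (sq_nonneg nx))]
  rw [hmin]
  have hs2 : (2:ℝ) ^ (2 * (q - 1)) = s ^ 2 := by
    rw [hs, mul_comm, pow_mul]
  refine le_min ?_ ?_
  · rw [hs2]
    calc ∑ i, nx^2 * (p i * (1 - p i)) / s^2
        ≤ ∑ _i : Fin d, nx^2 / s^2 := by
          refine Finset.sum_le_sum fun i _ => ?_
          have h1 : p i * (1 - p i) ≤ 1 := by nlinarith [hp0 i, hp1 i]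
          have h2 : (0:ℝ) < s^2 := by positivity
          rw [div_le_div_iff₀ h2 h2]
          linarith [mul_le_mul_of_nonneg_right
            (mul_le_mul_of_nonneg_left h1 (sq_nonneg nx)) h2.le]
      _ = (d : ℝ) / s^2 * nx^2 := by
          rw [Finset.sum_const, Finset.card_univ, Fintype.card_fin]
          simp only [nsmul_eq_mul]; ring
  · rw [← hs]
    have hcs : ∑ i, |x i| ≤ Real.sqrt d * nx := by
      have h1 : (∑ i, |x i|) ^ 2 ≤ (d : ℝ) * ∑ i, (x i)^2 := by
        have h2 := sq_sum_le_card_mul_sum_sq (s := (Finset.univ : Finset (Fin d)))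
          (f := fun i => |x i|)
        simpa [sq_abs, Finset.card_univ] using h2
      have h3 : (0:ℝ) ≤ ∑ i, |x i| := by positivity
      calc ∑ i, |x i| = Real.sqrt ((∑ i, |x i|)^2) := (Real.sqrt_sq h3).symm
        _ ≤ Real.sqrt ((d : ℝ) * ∑ i, (x i)^2) := Real.sqrt_le_sqrt h1
        _ = Real.sqrt d * nx := by rw [Real.sqrt_mul (by positivity), hnx]
    calc ∑ i, nx^2 * (p i * (1 - p i)) / s^2
        ≤ ∑ i, nx / s * |x i| := by
          refine Finset.sum_le_sum fun i _ => ?_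
          have hple2 : p i * (1 - p i) ≤ r i := by
            have h4 : p i ≤ r i := by simp only [hp]; linarith [hfl0 i]
            nlinarith [hp0 i, hp1 i]
          have h5 : nx^2 * (p i * (1 - p i)) / s^2 ≤ nx^2 * r i / s^2 := by
            apply div_le_div_of_nonneg_right ?_ (by positivity)
            · exact mul_le_mul_of_nonneg_left hple2 (by positivity)
          refine h5.trans (le_of_eq ?_)
          rw [hr i]
          field_simp
      _ = nx / s * ∑ i, |x i| := by rw [Finset.mul_sum]
      _ ≤ nx / s * (Real.sqrt d * nx) := by
          exact mul_le_mul_of_nonneg_left hcs (by positivity)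
      _ = Real.sqrt d / s * nx^2 := by ring
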